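/- For any natural number a and any finite multiset M of natural numbers, the polynomial C̃_{a,M}(q,t) = Σ_{P ∈ L_{a,M}} q^{area(P)} t^{depth(P)} is symmetric in q and t, i.e., C̃_{a,M}(q,t) = C̃_{a,M}(t,q). -/

import Mathlib

/-! ## Plane trees -/

/-- A plane tree: a root together with an ordered (left-to-right) list of subtrees.
A node is a *leaf* if it has no children, and *internal* otherwise. -/
inductive PTree : Type where
  | node : List PTree → PTree


namespace Luka

/-! ## Łukasiewicz paths

A path is encoded by its list of step increments: the step `(1,k)` (an up-step `U_k` of
degree `k`) is encoded by `k : ℤ` with `k ≥ 0`, and the down step `D = (1,-1)` by `-1`. -/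

/-- `P` is a Łukasiewicz path: it is nonempty, uses steps `(1,k)` with `k ≥ -1`,
stays (weakly) above the `x`-axis before its last step, and ends at height `-1`
(so that it goes strictly below the axis only at the last step, which is forced
to be the down-step `D`). -/
def IsLukas (P : List ℤ) : Prop :=
  P ≠ [] ∧ (∀ s ∈ P, -1 ≤ s) ∧ (∀ n, n < P.length → 0 ≤ (P.take n).sum) ∧ P.sum = -1

/-- The degrees of the up-steps of `P`, from left to right (the *profile* of `P`). -/
def upDegs (P : List ℤ) : List ℕ := (P.filter (fun s => 0 ≤ s)).map Int.toNat

/-- The profile multiset `𝔐(P)`: the multiset of degrees of the up-steps of `P`. -/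
def profileM (P : List ℤ) : Multiset ℕ := (upDegs P : Multiset ℕ)

/-- The degree of the first up-step of `P`, if any. -/
def firstUp? (P : List ℤ) : Option ℕ := (upDegs P).head?

/-- The degree of the last up-step of `P`, if any. -/
def lastUp? (P : List ℤ) : Option ℕ := (upDegs P).getLast?

/-- Auxiliary: starting from height `h`, record the starting height of every up-step. -/
def areaVecAux : ℤ → List ℤ → List ℤ
  | _, [] => []
  | h, s :: rest => (if 0 ≤ s then [h] else []) ++ areaVecAux (h + s) rest

/-- The area vector `Area(P)`: the `i`-th entry is the `y`-coordinate of the starting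
point of the `i`-th up-step of `P`. -/
def areaVec (P : List ℤ) : List ℤ := areaVecAux 0 P

/-- `area(P)`: the sum of the entries of the area vector (entries of a Łukasiewicz
path are nonnegative, so taking `Int.toNat` entrywise is harmless). -/
def area (P : List ℤ) : ℕ := ((areaVec P).map Int.toNat).sum

/-- Auxiliary computation of the depth values: `cur` is the depth value of the previous
step (`0` initially), and `stack` holds the pending depth values of the future matching
down-steps (top of the stack = value for the next matching down-step to come).
Reading an up-step `U_k` whose value is `cur` (inherited from the previous step) pushes
the values `cur+1, …, cur+k` for its `k` matching down-steps (its first matching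
down-step, which crosses its topmost interior level, gets `cur+1`, etc.); reading a
down-step pops its value.  The list returned records the value `d_i` of each up-step,
from left to right. -/
def depthVecAux : ℕ → List ℕ → List ℤ → List ℕ
  | _, _, [] => []
  | cur, stack, s :: rest =>
    if 0 ≤ s then
      cur :: depthVecAux cur ((List.range s.toNat).map (fun i => cur + i + 1) ++ stack) rest
    else
      match stack with
      | [] => depthVecAux cur [] rest
      | v :: st => depthVecAux v st rest

/-- The depth vector `Depth(P)`: the values `d_i` at the up-steps of `P`, left to right. -/
def depthVec (P : List ℤ) : List ℕ := depthVecAux 0 [] P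

/-- `depth(P)`: the sum of the entries of the depth vector. -/
def depth (P : List ℤ) : ℕ := (depthVec P).sum

/-- `P ∈ 𝓛_M`. -/
def MemL (M : Multiset ℕ) (P : List ℤ) : Prop := IsLukas P ∧ profileM P = M

/-- `P ∈ 𝓛_{a,M}`: first up-step of degree `a`, profile multiset `M ⊎ {a}`. -/
def MemLa (a : ℕ) (M : Multiset ℕ) (P : List ℤ) : Prop :=
  IsLukas P ∧ firstUp? P = some a ∧ profileM P = a ::ₘ M

/-- `P ∈ 𝓛_{M,b}`: last up-step of degree `b`, profile multiset `M ⊎ {b}`. -/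
def MemLb (M : Multiset ℕ) (b : ℕ) (P : List ℤ) : Prop :=
  IsLukas P ∧ lastUp? P = some b ∧ profileM P = b ::ₘ M

/-- `P ∈ 𝓛_{a,M,b}`: first up-step of degree `a`, last up-step of degree `b`,
profile multiset `M ⊎ {a, b}`. -/
def MemLab (a : ℕ) (M : Multiset ℕ) (b : ℕ) (P : List ℤ) : Prop :=
  IsLukas P ∧ firstUp? P = some a ∧ lastUp? P = some b ∧ profileM P = a ::ₘ b ::ₘ M

/-! ## Plane-tree statistics -/

/-- The (ordered) children of the root of a plane tree. -/
def children : PTree → List PTree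
  | .node ts => ts

/-- The degree of (the root of) a plane tree: its number of children. -/
def numChildren (t : PTree) : ℕ := (children t).length

mutual
/-- Number of internal nodes of a plane tree. -/
def internCount : PTree → ℕ
  | .node [] => 0
  | .node (t :: ts) => 1 + internCountL (t :: ts)
def internCountL : List PTree → ℕ
  | [] => 0
  | t :: ts => internCount t + internCountL ts
end

mutual
/-- `lthornT T` = the sum of `lthorn(u)` over all internal nodes `u` of `T`, where
`lthorn(u)` is the number of descending edges of strict ancestors `v` of `u` lying to
the left of the path from `v` to `u`.  (Every internal node of the subtree rooted at
the `i`-th child (0-indexed) of a node gains `i` left thorns from that node.) -/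
def lthornT : PTree → ℕ
  | .node ts => lthornL 0 ts
def lthornL : ℕ → List PTree → ℕ
  | _, [] => 0
  | i, t :: ts => lthornT t + i * internCount t + lthornL (i + 1) ts
end

mutual
/-- `rthornT T` = the sum of `rthorn(u)` over all internal nodes `u` of `T`, where
`rthorn(u)` is the number of descending edges of strict ancestors `v` of `u` lying to
the right of the path from `v` to `u`. -/
def rthornT : PTree → ℕ
  | .node ts => rthornL ts
def rthornL : List PTree → ℕ
  | [] => 0
  | t :: ts => rthornT t + ts.length * internCount t + rthornL ts
end

mutual
/-- The list of the values `lthorn(u)` for the internal nodes `u` of `T`, in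
contour-walk (preorder) order. -/
def lthornList : PTree → List ℕ
  | .node [] => []
  | .node (t :: ts) => 0 :: lthornLL 0 (t :: ts)
def lthornLL : ℕ → List PTree → List ℕ
  | _, [] => []
  | i, t :: ts => (lthornList t).map (· + i) ++ lthornLL (i + 1) ts
end

mutual
/-- The list of the values `rthorn(u)` for the internal nodes `u` of `T`, in
contour-walk (preorder) order. -/
def rthornList : PTree → List ℕ
  | .node [] => []
  | .node (t :: ts) => 0 :: rthornLL (t :: ts)
def rthornLL : List PTree → List ℕ
  | [] => []
  | t :: ts => (rthornList t).map (· + ts.length) ++ rthornLL ts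
end

/-! ## The bijections `λ` and `τ` -/

mutual
/-- `λ`: record each node of the tree at its first visit in the left-to-right contour
walk: `U_k` (i.e. `k`) for an internal node with `k+1` children, `D` (i.e. `-1`)
for a leaf. -/
def lambdaT : PTree → List ℤ
  | .node ts => ((ts.length : ℤ) - 1) :: lambdaL ts
def lambdaL : List PTree → List ℤ
  | [] => []
  | t :: ts => lambdaT t ++ lambdaL ts
end

/-- Auxiliary for `τ`: reading the path from right to left, maintain the stack of the
already-built subtrees (in left-to-right order); a down-step `D` creates a leaf and an
up-step `U_k` grabs the `k+1` topmost subtrees as its children.  This builds the same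
tree as the left-to-right "leftmost bud" construction. -/
def tauStack (P : List ℤ) : List PTree :=
  P.foldr (fun s st =>
    if s < 0 then PTree.node [] :: st
    else PTree.node (st.take (s.toNat + 1)) :: st.drop (s.toNat + 1)) []

/-- `τ`: the plane tree associated with a Łukasiewicz path. -/
def tau (P : List ℤ) : PTree := (tauStack P).headD (.node [])

mutual
/-- The mirror of a plane tree: reverse the left-to-right order of the children of
every internal node. -/
def mir : PTree → PTree
  | .node ts => .node (mirL ts).reverse
def mirL : List PTree → List PTree
  | [] => []
  | t :: ts => mir t :: mirL ts
end

mutual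
/-- The subtrees rooted at the internal nodes of `T`, in contour-walk (preorder)
order. -/
def internalSubtrees : PTree → List PTree
  | .node [] => []
  | .node (t :: ts) => .node (t :: ts) :: internalSubtreesL (t :: ts)
def internalSubtreesL : List PTree → List PTree
  | [] => []
  | t :: ts => internalSubtrees t ++ internalSubtreesL ts
end

/-- The multiset of degrees of the non-root internal nodes of `T`. -/
def nonRootInternalDegs (T : PTree) : Multiset ℕ :=
  (((internalSubtreesL (children T)).map numChildren : List ℕ) : Multiset ℕ)

/-! ## Lodestars and the lodestar swap -/

/-- A node is a lodestar-type node if it is internal and all its children are leaves. -/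
def isLodestarNode (t : PTree) : Bool :=
  !(children t).isEmpty && (children t).all (fun c => (children c).isEmpty)

mutual
/-- The subtree rooted at the *left lodestar* of `T`: the first internal node, in
contour-walk (preorder) order, all of whose children are leaves (if it exists). -/
def leftLode? : PTree → Option PTree
  | .node ts =>
    if isLodestarNode (.node ts) then some (.node ts) else leftLodeL? ts
def leftLodeL? : List PTree → Option PTree
  | [] => none
  | t :: ts =>
    match leftLode? t with
    | some r => some r
    | none => leftLodeL? ts
end

mutual
/-- The subtree rooted at the *right lodestar* of `T`: the last internal node, in
contour-walk (preorder) order, all of whose children are leaves (if it exists). -/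
def rightLode? : PTree → Option PTree
  | .node ts =>
    match rightLodeL? ts with
    | some r => some r
    | none => if isLodestarNode (.node ts) then some (.node ts) else none
def rightLodeL? : List PTree → Option PTree
  | [] => none
  | t :: ts =>
    match rightLodeL? ts with
    | some r => some r
    | none => rightLode? t
end

mutual
/-- Replace the left lodestar of `T` (first preorder all-leaf-children internal node)
by the tree `r`; `none` if `T` has no internal node. -/
def replF : PTree → PTree → Option PTree
  | r, .node ts =>
    if isLodestarNode (.node ts) then some r
    else (replFL r ts).map PTree.node
def replFL : PTree → List PTree → Option (List PTree)
  | _, [] => none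
  | r, t :: ts =>
    match replF r t with
    | some t' => some (t' :: ts)
    | none => (replFL r ts).map (t :: ·)
end

mutual
/-- Replace the right lodestar of `T` (last preorder all-leaf-children internal node)
by the tree `r`; `none` if `T` has no internal node. -/
def replL : PTree → PTree → Option PTree
  | r, .node ts =>
    match replLL r ts with
    | some ts' => some (.node ts')
    | none => if isLodestarNode (.node ts) then some r else none
def replLL : PTree → List PTree → Option (List PTree)
  | _, [] => none
  | r, t :: ts =>
    match replLL r ts with
    | some ts' => some (t :: ts')
    | none => (replL r t).map (· :: ts)
end

/-- The lodestar swap: exchange the subtrees rooted at the left lodestar and the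
right lodestar of `T` (each a node together with its pendant leaves). -/
def lodeSwap (T : PTree) : PTree :=
  match leftLode? T, rightLode? T with
  | some L, some R => ((replF R T).bind (replL L)).getD T
  | _, _ => T

end Luka

namespace Luka

theorem mirL_eq_map : ∀ ts, mirL ts = ts.map mir
  | [] => rfl
  | t :: ts => by simp [mirL, mirL_eq_map ts]

mutual
theorem mir_mir : ∀ T, mir (mir T) = T
  | .node ts => by
    simp only [mir, mirL_eq_map, List.map_reverse, List.reverse_reverse, List.map_map]
    rw [mir_mirL ts]
theorem mir_mirL : ∀ ts : List PTree, ts.map (mir ∘ mir) = ts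
  | [] => rfl
  | t :: ts => by simp only [List.map_cons, Function.comp_apply, mir_mir t, mir_mirL ts]
end

theorem icL_eq_sum : ∀ ts, internCountL ts = (ts.map internCount).sum
  | [] => rfl
  | t :: ts => by simp [internCountL, icL_eq_sum ts]

mutual
theorem ic_mir : ∀ T, internCount (mir T) = internCount T
  | .node ts => by
    cases ts with
    | nil => rfl
    | cons t ts =>
      simp only [mir, mirL_eq_map]
      rw [show internCount (PTree.node ((((t::ts).map mir)).reverse)) =
        1 + internCountL (((t::ts).map mir).reverse) from ?_, internCount]
      · rw [icL_eq_sum, icL_eq_sum, List.map_reverse, List.sum_reverse, List.map_map,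
          ic_mirL (t :: ts)]
      · rcases h : ((t::ts).map mir).reverse with _ | ⟨a, l⟩
        · simp at h
        · rw [internCount]
theorem ic_mirL : ∀ ts : List PTree, ts.map (internCount ∘ mir) = ts.map internCount
  | [] => rfl
  | t :: ts => by
    simp only [List.map_cons, Function.comp_apply, ic_mir t, ic_mirL ts]
end

theorem rthornL_append : ∀ A B, rthornL (A ++ B) =
    rthornL A + B.length * internCountL A + rthornL B
  | [], B => by simp [rthornL, internCountL]
  | t :: ts, B => by
    simp only [List.cons_append, rthornL, rthornL_append ts B, internCountL,
      List.length_append, List.append_eq]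
    ring

theorem icL_reverse (ts : List PTree) : internCountL ts.reverse = internCountL ts := by
  rw [icL_eq_sum, icL_eq_sum, List.map_reverse, List.sum_reverse]

mutual
theorem rthorn_mir : ∀ T, rthornT (mir T) = lthornT T
  | .node ts => by
    rw [mir, rthornT, lthornT, mirL_eq_map, rthorn_mirL ts 0]
    ring
theorem rthorn_mirL : ∀ (ts : List PTree) (i : ℕ),
    lthornL i ts = rthornL ((ts.map mir).reverse) + i * internCountL ts
  | [], i => by simp [lthornL, rthornL, internCountL]
  | t :: ts, i => by
    rw [lthornL, rthorn_mirL ts (i+1), List.map_cons, List.reverse_cons, rthornL_append]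
    simp only [rthornL, internCountL, List.length_nil, List.length_cons]
    rw [icL_reverse, rthorn_mir t, icL_eq_sum (ts.map mir), List.map_map, ic_mirL ts,
      ← icL_eq_sum, ic_mir t]
    ring
end

theorem lthorn_mir (T : PTree) : lthornT (mir T) = rthornT T := by
  rw [← rthorn_mir (mir T), mir_mir]

theorem lambdaL_append : ∀ A B, lambdaL (A ++ B) = lambdaL A ++ lambdaL B
  | [], B => rfl
  | t :: ts, B => by simp [lambdaL, lambdaL_append ts B]

mutual
theorem lambdaT_sum : ∀ T, (lambdaT T).sum = -1
  | .node ts => by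
    rw [lambdaT, List.sum_cons, lambdaL_sum ts]
    ring
theorem lambdaL_sum : ∀ ts : List PTree, (lambdaL ts).sum = -(ts.length : ℤ)
  | [] => rfl
  | t :: ts => by
    rw [lambdaL, List.sum_append, lambdaT_sum t, lambdaL_sum ts, List.length_cons]
    push_cast
    ring
end

mutual
theorem lambdaT_ge : ∀ T, ∀ s ∈ lambdaT T, (-1 : ℤ) ≤ s
  | .node ts => by
    intro s hs
    rcases List.mem_cons.1 hs with h | h
    · subst h; have := ts.length.cast_nonneg (α := ℤ); omega
    · exact lambdaL_ge ts s h
theorem lambdaL_ge : ∀ ts : List PTree, ∀ s ∈ lambdaL ts, (-1 : ℤ) ≤ s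
  | [], s, hs => by simp [lambdaL] at hs
  | t :: ts, s, hs => by
    rw [lambdaL, List.mem_append] at hs
    exact hs.elim (lambdaT_ge t s) (lambdaL_ge ts s)
end

theorem suffix_append_cases {Q B : List ℤ} :
    ∀ {A : List ℤ}, Q <:+ A ++ B → Q <:+ B ∨ ∃ Q', Q = Q' ++ B ∧ Q' <:+ A
  | [], h => Or.inl h
  | a :: A', h => by
    rw [List.cons_append, List.suffix_cons_iff] at h
    rcases h with rfl | h
    · exact Or.inr ⟨a :: A', rfl, List.suffix_refl _⟩
    · rcases suffix_append_cases h with h | ⟨Q', rfl, hQ'⟩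
      · exact Or.inl h
      · exact Or.inr ⟨Q', rfl, hQ'.trans (List.suffix_cons a A')⟩


mutual
theorem lambdaT_suffix : ∀ T, ∀ Q, Q <:+ lambdaT T → Q ≠ [] → Q.sum ≤ -1
  | .node ts, Q, hQ, hne => by
    rw [lambdaT] at hQ
    rcases (List.suffix_cons_iff).1 hQ with h | h
    · subst h
      simp [lambdaL_sum ts]
    · exact lambdaL_suffix ts Q h hne
theorem lambdaL_suffix : ∀ ts : List PTree, ∀ Q, Q <:+ lambdaL ts → Q ≠ [] → Q.sum ≤ -1
  | [], Q, hQ, hne => by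
    rw [lambdaL] at hQ
    exact absurd (List.suffix_nil.1 hQ) hne
  | t :: ts, Q, hQ, hne => by
    rw [lambdaL] at hQ
    rcases suffix_append_cases hQ with h | ⟨Q', rfl, hQ'⟩
    · exact lambdaL_suffix ts Q h hne
    · rcases eq_or_ne Q' [] with rfl | hQ'ne
      · rw [List.nil_append] at hne ⊢
        have : (lambdaL ts).sum = -(ts.length : ℤ) := lambdaL_sum ts
        have hlen : ts ≠ [] := by
          rintro rfl
          exact hne rfl
        have : 1 ≤ ts.length := List.length_pos_iff.2 hlen
        omega
      · have h1 := lambdaT_suffix t Q' hQ' hQ'ne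
        have h2 := lambdaL_sum ts
        rw [List.sum_append]
        have : (0:ℤ) ≤ ts.length := ts.length.cast_nonneg
        omega
end

theorem lambdaT_ne_nil (T : PTree) : lambdaT T ≠ [] := by
  cases T with | node ts => simp [lambdaT]

theorem isLukas_lambdaT (T : PTree) : IsLukas (lambdaT T) := by
  refine ⟨lambdaT_ne_nil T, lambdaT_ge T, ?_, lambdaT_sum T⟩
  intro n hn
  have hsplit : ((lambdaT T).take n).sum + ((lambdaT T).drop n).sum = -1 := by
    rw [← List.sum_append, List.take_append_drop, lambdaT_sum]
  have hdrop : ((lambdaT T).drop n).sum ≤ -1 := by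
    apply lambdaT_suffix T _ (List.drop_suffix n _)
    intro h
    have := List.drop_eq_nil_iff.1 h
    omega
  omega

/-- The folding function of `tauStack`. -/
def tGo (P : List ℤ) (st : List PTree) : List PTree :=
  P.foldr (fun s st =>
    if s < 0 then PTree.node [] :: st
    else PTree.node (st.take (s.toNat + 1)) :: st.drop (s.toNat + 1)) st

theorem tauStack_eq_tGo (P : List ℤ) : tauStack P = tGo P [] := rfl

theorem tGo_append (A B : List ℤ) (st : List PTree) :
    tGo (A ++ B) st = tGo A (tGo B st) := List.foldr_append ..

theorem tGo_cons (s : List ℤ) : True := trivial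

mutual
theorem tGo_lambdaT : ∀ T st, tGo (lambdaT T) st = T :: st
  | .node ts, st => by
    cases ts with
    | nil => simp [lambdaT, lambdaL, tGo]
    | cons t ts =>
      rw [lambdaT, show ((((((t::ts)).length:ℤ))-1) :: lambdaL (t::ts) =
        [(((t::ts).length:ℤ)-1)] ++ lambdaL (t::ts)) from rfl,
        tGo_append, tGo_lambdaL (t::ts) st]
      simp only [tGo, List.foldr_cons, List.foldr_nil]
      rw [if_neg (by simp)]
      have htn : ((((t::ts).length:ℤ))-1).toNat + 1 = (t::ts).length := by
        simp
      rw [htn, List.take_left, List.drop_left]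
theorem tGo_lambdaL : ∀ (ts : List PTree) (st), tGo (lambdaL ts) st = ts ++ st
  | [], st => rfl
  | t :: ts, st => by
    rw [lambdaL, tGo_append, tGo_lambdaL ts st, tGo_lambdaT t (ts ++ st), List.cons_append]
end

theorem tau_lambdaT (T : PTree) : tau (lambdaT T) = T := by
  rw [tau, tauStack_eq_tGo, tGo_lambdaT]
  rfl

/-- τ is a left inverse of λ on paths with the suffix condition. -/
theorem lambdaL_tauStack : ∀ P : List ℤ, (∀ s ∈ P, -1 ≤ s) →
    (∀ Q, Q <:+ P → Q ≠ [] → Q.sum ≤ -1) →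
    lambdaL (tauStack P) = P ∧ ((tauStack P).length : ℤ) = -P.sum
  | [], _, _ => ⟨rfl, by simp [tauStack]⟩
  | s :: rest, hge, hsuf => by
    have ih := lambdaL_tauStack rest (fun x hx => hge x (List.mem_cons_of_mem _ hx))
      (fun Q hQ => hsuf Q (hQ.trans (List.suffix_cons s rest)))
    set st := tauStack rest with hst
    have hunfold : tauStack (s :: rest) =
        if s < 0 then PTree.node [] :: st
        else PTree.node (st.take (s.toNat + 1)) :: st.drop (s.toNat + 1) := rfl
    by_cases hs : s < 0
    · have hs1 : s = -1 := by have := hge s List.mem_cons_self; omega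
      rw [hunfold, if_pos hs]
      constructor
      · rw [lambdaL, lambdaT, ih.1, hs1]; rfl
      · simp only [List.length_cons, List.sum_cons]
        push_cast
        have := ih.2
        omega
    · push_neg at hs
      have hsum : (s :: rest).sum ≤ -1 := hsuf _ (List.suffix_refl _) (by simp)
      rw [List.sum_cons] at hsum
      have hlen : s.toNat + 1 ≤ st.length := by
        have := ih.2
        omega
      rw [hunfold, if_neg (by omega)]
      constructor
      · rw [lambdaL, lambdaT, List.cons_append, ← lambdaL_append,
          List.take_append_drop, ih.1, List.length_take, min_eq_left hlen]
        congr 1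
        push_cast
        omega
      · simp only [List.length_cons, List.length_drop, List.sum_cons]
        push_cast
        have := ih.2
        omega

theorem lambdaT_tau (P : List ℤ) (hP : IsLukas P) : lambdaT (tau P) = P := by
  obtain ⟨hne, hge, hpre, hsum⟩ := hP
  have hsuf : ∀ Q, Q <:+ P → Q ≠ [] → Q.sum ≤ -1 := by
    intro Q hQ hQne
    obtain ⟨A, rfl⟩ := hQ
    have hlt : A.length < (A ++ Q).length := by
      simp only [List.length_append]
      have := List.length_pos_iff.2 hQne
      omega
    have h1 := hpre A.length hlt
    rw [List.take_left] at h1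
    rw [List.sum_append] at hsum
    omega
  obtain ⟨h1, h2⟩ := lambdaL_tauStack P hge hsuf
  rw [hsum] at h2
  rcases hstk : tauStack P with _ | ⟨T, rest⟩
  · rw [hstk] at h2; simp at h2
  · rw [hstk] at h2 h1
    simp only [List.length_cons] at h2
    have : rest = [] := List.eq_nil_of_length_eq_zero (by push_cast at h2; omega)
    subst this
    rw [lambdaL, lambdaL, List.append_nil] at h1
    rw [tau, hstk]
    exact h1

theorem upDegs_append (A B : List ℤ) : upDegs (A ++ B) = upDegs A ++ upDegs B := by
  simp [upDegs]

theorem upDegs_lambdaT_nonempty (ts : List PTree) (h : ts ≠ []) :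
    upDegs (lambdaT (.node ts)) = (ts.length - 1) :: upDegs (lambdaL ts) := by
  have hl : 1 ≤ ts.length := List.length_pos_iff.2 h
  rw [lambdaT, upDegs, List.filter_cons, if_pos (by simp; omega), List.map_cons]
  rw [show ((ts.length:ℤ) - 1).toNat = ts.length - 1 by omega]
  rfl

theorem firstUp_lambda_mir (T : PTree) :
    firstUp? (lambdaT (mir T)) = firstUp? (lambdaT T) := by
  cases T with
  | node ts =>
    cases ts with
    | nil => rfl
    | cons t ts =>
      rw [mir, mirL_eq_map]
      rw [firstUp?, firstUp?, upDegs_lambdaT_nonempty _ (by simp),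
        upDegs_lambdaT_nonempty _ (by simp)]
      simp

/-- profile of a forest as a multiset sum. -/
theorem profile_lambdaL_eq_sum : ∀ ts : List PTree,
    (upDegs (lambdaL ts) : Multiset ℕ) =
      (ts.map (fun t => (upDegs (lambdaT t) : Multiset ℕ))).sum
  | [] => rfl
  | t :: ts => by
    rw [lambdaL, upDegs_append, List.map_cons, List.sum_cons, ← profile_lambdaL_eq_sum ts]
    simp

mutual
theorem profile_lambda_mir : ∀ T, profileM (lambdaT (mir T)) = profileM (lambdaT T)
  | .node ts => by
    cases ts with
    | nil => rfl
    | cons t ts =>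
      rw [mir, mirL_eq_map, profileM, profileM,
        upDegs_lambdaT_nonempty _ (by simp), upDegs_lambdaT_nonempty _ (by simp)]
      have key : (upDegs (lambdaL (((t::ts).map mir).reverse)) : Multiset ℕ)
          = (upDegs (lambdaL (t::ts)) : Multiset ℕ) := by
        rw [profile_lambdaL_eq_sum, profile_lambdaL_eq_sum, List.map_reverse,
          List.sum_reverse]
        simp only [List.map_map, Function.comp_def]
        rw [profile_lambda_mirL (t :: ts)]
      simp only [List.length_reverse, List.length_map, ← Multiset.cons_coe]
      rw [key]
theorem profile_lambda_mirL : ∀ ts : List PTree,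
    ts.map (fun t => (upDegs (lambdaT (mir t)) : Multiset ℕ)) =
      ts.map (fun t => (upDegs (lambdaT t) : Multiset ℕ))
  | [] => rfl
  | t :: ts => by
    have h := profile_lambda_mir t
    simp only [profileM] at h
    simp only [List.map_cons, h, profile_lambda_mirL ts]
end

theorem areaVecAux_append : ∀ (A B : List ℤ) (h : ℤ),
    areaVecAux h (A ++ B) = areaVecAux h A ++ areaVecAux (h + A.sum) B
  | [], B, h => by simp [areaVecAux]
  | s :: A, B, h => by
    simp only [List.cons_append, areaVecAux, List.append_eq,
      areaVecAux_append A B (h + s), List.sum_cons, List.append_assoc, add_assoc]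

mutual
theorem areaT_sum : ∀ (T : PTree) (h : ℤ),
    (areaVecAux h (lambdaT T)).sum = h * internCount T + rthornT T
  | .node [], h => by
    simp [lambdaT, lambdaL, areaVecAux, internCount, rthornT, rthornL]
  | .node (t :: ts), h => by
    rw [lambdaT, areaVecAux, if_pos (by simp), List.singleton_append, List.sum_cons]
    rw [show h + ((((t::ts).length : ℤ)) - 1) = (h - 1) + (t::ts).length by ring]
    rw [areaL_sum (t :: ts) (h - 1), internCount, rthornT]
    push_cast [List.length_cons]
    ring
theorem areaL_sum : ∀ (ts : List PTree) (h : ℤ),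
    (areaVecAux (h + ts.length) (lambdaL ts)).sum
      = (h + 1) * internCountL ts + rthornL ts
  | [], h => by simp [lambdaL, areaVecAux, internCountL, rthornL]
  | t :: ts, h => by
    rw [lambdaL, areaVecAux_append, lambdaT_sum t]
    rw [List.sum_append,
      show h + ((t::ts).length : ℤ) + -1 = h + ts.length by
        simp only [List.length_cons]; push_cast; ring,
      areaT_sum t, areaL_sum ts h, internCountL, rthornL]
    push_cast [List.length_cons]
    ring
end

mutual
theorem areaT_mem : ∀ (T : PTree) (h : ℤ), ∀ x ∈ areaVecAux h (lambdaT T), h ≤ x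
  | .node [], h => by simp [lambdaT, lambdaL, areaVecAux]
  | .node (t :: ts), h => by
    intro x hx
    rw [lambdaT, areaVecAux, if_pos (by simp), List.singleton_append,
      List.mem_cons] at hx
    rcases hx with rfl | hx
    · exact le_rfl
    · have h2 := areaL_mem (t :: ts) (h - 1) x (by
        rw [show (h - 1) + ((t::ts).length : ℤ) = h + (((t::ts).length : ℤ) - 1) by ring]
        exact hx)
      omega
theorem areaL_mem : ∀ (ts : List PTree) (h : ℤ), ∀ x ∈ areaVecAux (h + ts.length) (lambdaL ts), h + 1 ≤ x
  | [], h => by simp [lambdaL, areaVecAux]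
  | t :: ts, h => by
    intro x hx
    rw [lambdaL, areaVecAux_append, lambdaT_sum t, List.mem_append] at hx
    rcases hx with hx | hx
    · have h2 := areaT_mem t _ x hx
      have h3 : (1:ℤ) ≤ ((t::ts).length : ℤ) := by push_cast [List.length_cons]; omega
      omega
    · exact areaL_mem ts h x (by
        rw [show h + (ts.length : ℤ) = h + ((t::ts).length:ℤ) + -1 by
          simp only [List.length_cons]; push_cast; ring]
        exact hx)
end

theorem sum_toNat_of_nonneg : ∀ (l : List ℤ), (∀ x ∈ l, 0 ≤ x) →
    ((l.map Int.toNat).sum : ℤ) = l.sum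
  | [], _ => rfl
  | x :: l, h => by
    have ih := sum_toNat_of_nonneg l (fun y hy => h y (List.mem_cons_of_mem _ hy))
    have hx := h x List.mem_cons_self
    simp only [List.map_cons, List.sum_cons]
    rw [Nat.cast_add, Int.toNat_of_nonneg hx, ih]

theorem area_lambdaT (T : PTree) : area (lambdaT T) = rthornT T := by
  have h1 : ((area (lambdaT T) : ℤ)) = rthornT T := by
    rw [area, areaVec, sum_toNat_of_nonneg _ (areaT_mem T 0), areaT_sum T 0]
    ring
  exact_mod_cast h1

theorem range_map_peel (n : ℕ) (b i : ℕ) :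
    (List.range (n + 1)).map (fun j => b + i + 1 + j)
      = (b + i + 1) :: (List.range n).map (fun j => b + (i + 1) + 1 + j) := by
  rw [List.range_succ_eq_map, List.map_cons, List.map_map]
  congr 1
  apply List.map_congr_left
  intro j _
  simp [Function.comp]
  omega

mutual
theorem DTsum : ∀ (T : PTree) (c v : ℕ) (st : List ℕ) (rest : List ℤ),
    (depthVecAux c (v :: st) (lambdaT T ++ rest)).sum
      = c * internCount T + lthornT T + (depthVecAux v st rest).sum
  | .node [], c, v, st, rest => by
    simp [lambdaT, lambdaL, depthVecAux, internCount, lthornT, lthornL]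
  | .node (t :: ts), c, v, st, rest => by
    rw [lambdaT, List.cons_append]
    simp only [depthVecAux]
    rw [if_pos (by simp), List.sum_cons]
    rw [show (((t::ts).length : ℤ) - 1).toNat = ts.length by simp]
    rw [show ((List.range ts.length).map (fun i => c + i + 1))
        = (List.range ts.length).map (fun j => c + 0 + 1 + j) by
      apply List.map_congr_left; intro j _; omega]
    rw [internCount, lthornT]
    have h := DLsum t ts c 0 v st rest
    simp only [Nat.add_zero] at h
    rw [h]
    ring
termination_by T c v st rest => sizeOf T
theorem DLsum : ∀ (t : PTree) (ts : List PTree) (b i v : ℕ) (st : List ℕ) (rest : List ℤ),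
    (depthVecAux (b + i)
        ((List.range ts.length).map (fun j => b + i + 1 + j) ++ (v :: st))
        (lambdaL (t :: ts) ++ rest)).sum
      = b * internCountL (t :: ts) + lthornL i (t :: ts) + (depthVecAux v st rest).sum
  | t, [], b, i, v, st, rest => by
    simp only [lambdaL, List.append_nil, List.length_nil, List.range_zero, List.map_nil,
      List.nil_append]
    rw [internCountL, internCountL, lthornL, lthornL, DTsum t (b + i) v st rest]
    ring
  | t, t' :: ts', b, i, v, st, rest => by
    rw [internCountL, lthornL]
    rw [lambdaL, List.append_assoc, List.length_cons, range_map_peel, List.cons_append]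
    rw [DTsum t (b + i) (b + i + 1) _ _]
    rw [show b + i + 1 = b + (i + 1) from by omega]
    rw [DLsum t' ts' b (i + 1) v st rest]
    ring
termination_by t ts b i v st rest => 1 + sizeOf t + sizeOf ts
theorem DTsum0 : ∀ (T : PTree) (c : ℕ),
    (depthVecAux c [] (lambdaT T)).sum = c * internCount T + lthornT T
  | .node [], c => by
    simp [lambdaT, lambdaL, depthVecAux, internCount, lthornT, lthornL]
  | .node (t :: ts), c => by
    rw [lambdaT]
    simp only [depthVecAux]
    rw [if_pos (by simp), List.sum_cons]
    rw [show (((t::ts).length : ℤ) - 1).toNat = ts.length by simp]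
    rw [List.append_nil]
    rw [show ((List.range ts.length).map (fun i => c + i + 1))
        = (List.range ts.length).map (fun j => c + 0 + 1 + j) by
      apply List.map_congr_left; intro j _; omega]
    rw [internCount, lthornT]
    have h := DLsum0 t ts c 0
    simp only [Nat.add_zero] at h
    rw [h]
    ring
termination_by T c => sizeOf T
theorem DLsum0 : ∀ (t : PTree) (ts : List PTree) (b i : ℕ),
    (depthVecAux (b + i)
        ((List.range ts.length).map (fun j => b + i + 1 + j))
        (lambdaL (t :: ts))).sum
      = b * internCountL (t :: ts) + lthornL i (t :: ts)
  | t, [], b, i => by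
    simp only [lambdaL, List.append_nil, List.length_nil, List.range_zero, List.map_nil]
    rw [internCountL, internCountL, lthornL, lthornL, DTsum0 t (b + i)]
    ring
  | t, t' :: ts', b, i => by
    rw [internCountL, lthornL]
    rw [lambdaL, List.length_cons, range_map_peel]
    rw [DTsum t (b + i) (b + i + 1) _ _]
    rw [show b + i + 1 = b + (i + 1) from by omega]
    rw [DLsum0 t' ts' b (i + 1)]
    ring
termination_by t ts b i => 1 + sizeOf t + sizeOf ts
end

theorem depth_lambdaT (T : PTree) : depth (lambdaT T) = lthornT T := by
  rw [depth, depthVec, DTsum0 T 0, Nat.zero_mul, Nat.zero_add]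

/-- The mirror involution on paths. -/
def sigma (P : List ℤ) : List ℤ := lambdaT (mir (tau P))

end Luka

open Luka in
/-- **[QZ25, Theorem 1.1].**  For any natural `a` and any finite multiset `M` of
naturals, the polynomial `C̃_{a,M}(q,t) = Σ_{P ∈ 𝓛_{a,M}} q^{area(P)} t^{depth(P)}`
is symmetric in `q, t`.  The finite set `𝓛_{a,M}` is presented as an arbitrary
`Finset S` whose members are exactly the Łukasiewicz paths with first up-step of
degree `a` and profile multiset `M ⊎ {a}`. -/
theorem tildeC_aM_qt_symm (a : ℕ) (M : Multiset ℕ) {R : Type*} [CommSemiring R]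
    (q t : R) (S : Finset (List ℤ)) (hS : ∀ P, P ∈ S ↔ MemLa a M P) :
    ∑ P ∈ S, q ^ area P * t ^ depth P = ∑ P ∈ S, t ^ area P * q ^ depth P := by
  have key : ∀ P, MemLa a M P → MemLa a M (sigma P) ∧ sigma (sigma P) = P ∧
      area (sigma P) = depth P ∧ depth (sigma P) = area P := by
    intro P hP
    have hT : lambdaT (tau P) = P := lambdaT_tau P hP.1
    set T := tau P with hTdef
    refine ⟨⟨isLukas_lambdaT _, ?_, ?_⟩, ?_, ?_, ?_⟩
    · rw [sigma, firstUp_lambda_mir T, hT]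
      exact hP.2.1
    · rw [sigma, profile_lambda_mir T, hT]
      exact hP.2.2
    · rw [sigma, sigma, tau_lambdaT, mir_mir, hT]
    · rw [sigma, area_lambdaT, rthorn_mir, ← hT, depth_lambdaT, tau_lambdaT]
    · rw [sigma, depth_lambdaT, lthorn_mir, ← hT, area_lambdaT, tau_lambdaT]
  refine Finset.sum_nbij' (i := fun P => sigma P) (j := fun P => sigma P)
    ?_ ?_ ?_ ?_ ?_
  · intro P hPS
    exact (hS _).2 (key P ((hS P).1 hPS)).1
  · intro P hPS
    exact (hS _).2 (key P ((hS P).1 hPS)).1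
  · intro P hPS
    exact (key P ((hS P).1 hPS)).2.1
  · intro P hPS
    exact (key P ((hS P).1 hPS)).2.1
  · intro P hPS
    obtain ⟨_, _, h3, h4⟩ := key P ((hS P).1 hPS)
    rw [h3, h4, mul_comm]
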